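/- Let η⋆_{xw}, η⋆_{xw'}, δ⋆_{x'w} : U → [0,1] be measurable with |η⋆_{xw}(u) − η⋆_{xw'}(u)| ≤ ε_w pointwise and δ⋆_{x'w}(u) ≤ U_X pointwise. Define ω_{xw} = E[η⋆_{xw}], ω_{xw'} = E[η⋆_{xw'}], κ0 = E[(1−η⋆_{xw})(1−δ⋆_{x'w})], χ' = E[δ⋆_{x'w}]. Then ω_{xw} − ω_{xw'}·U_X ≥ 1 − κ0 − U_X − ε_w·χ'. -/

import Mathlib

open MeasureTheory

lemma bdd_integrable {U : Type*} [MeasurableSpace U] (P : Measure U) [IsProbabilityMeasure P]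
    (f : U → ℝ) (hf : Measurable f) (hb : ∀ u, f u ∈ Set.Icc (0:ℝ) 1) :
    Integrable f P := by
  apply Integrable.mono' (integrable_const 1) hf.aestronglyMeasurable
  filter_upwards with u
  have := hb u
  rw [Real.norm_eq_abs, abs_le]
  exact ⟨by linarith [this.1], this.2⟩

/-- Third coupled inequality in display (14) of Theorem 2 of Silva–Evans:
with `ω_{xw} = E[η⋆_{xw}]`, `ω_{xw'} = E[η⋆_{xw'}]`, `κ₀ = E[(1-η⋆_{xw})(1-δ⋆_{x'w})]`,
`χ' = E[δ⋆_{x'w}]`: `ω_{xw} - ω_{xw'}·U_X ≥ 1 - κ₀ - U_X - ε_w·χ'`. -/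
theorem stmt8 {U : Type*} [MeasurableSpace U] (P : Measure U) [IsProbabilityMeasure P]
    (ηxw ηxw' δx'w : U → ℝ)
    (hη1 : Measurable ηxw) (hη2 : Measurable ηxw') (hδ : Measurable δx'w)
    (hηxw : ∀ u, ηxw u ∈ Set.Icc (0:ℝ) 1) (hηxw' : ∀ u, ηxw' u ∈ Set.Icc (0:ℝ) 1)
    (hδx'w : ∀ u, δx'w u ∈ Set.Icc (0:ℝ) 1)
    (εw UX : ℝ)
    (hcross : ∀ u, |ηxw u - ηxw' u| ≤ εw)
    (hδU : ∀ u, δx'w u ≤ UX) :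
    1 - (∫ u, (1 - ηxw u) * (1 - δx'w u) ∂P) - UX - εw * (∫ u, δx'w u ∂P) ≤
      (∫ u, ηxw u ∂P) - (∫ u, ηxw' u ∂P) * UX := by
  have hia := bdd_integrable P ηxw hη1 hηxw
  have hib := bdd_integrable P ηxw' hη2 hηxw'
  have hid := bdd_integrable P δx'w hδ hδx'w
  have hiprod : Integrable (fun u => (1 - ηxw u) * (1 - δx'w u)) P := by
    apply bdd_integrable P _ ((measurable_const.sub hη1).mul (measurable_const.sub hδ))
    intro u
    show (1 - ηxw u) * (1 - δx'w u) ∈ Set.Icc (0:ℝ) 1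
    have h1 := hηxw u; have h2 := hδx'w u
    constructor
    · exact mul_nonneg (by linarith [h1.2]) (by linarith [h2.2])
    · nlinarith [h1.1, h1.2, h2.1, h2.2]
  have key : ∫ u, (1 - (1 - ηxw u) * (1 - δx'w u) - UX - εw * δx'w u) ∂P ≤
      ∫ u, (ηxw u - ηxw' u * UX) ∂P := by
    apply integral_mono
    · exact ((integrable_const 1).sub hiprod |>.sub (integrable_const UX)).sub (hid.const_mul εw)
    · exact hia.sub (hib.mul_const UX)
    · intro u
      have h1 := hηxw u; have h2 := hηxw' u; have h3 := hδx'w u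
      have h4 := (abs_le.mp (hcross u)).1
      have h5 := hδU u
      simp only
      nlinarith [mul_nonneg h3.1 (by linarith : (0:ℝ) ≤ ηxw u - ηxw' u + εw),
        mul_nonneg (by linarith : (0:ℝ) ≤ UX - δx'w u) (by linarith [h2.2] : (0:ℝ) ≤ 1 - ηxw' u)]
  have i1 : Integrable (fun u => 1 - (1 - ηxw u) * (1 - δx'w u)) P := (integrable_const 1).sub hiprod
  have i2 : Integrable (fun u => 1 - (1 - ηxw u) * (1 - δx'w u) - UX) P := i1.sub (integrable_const UX)
  have iεd : Integrable (fun u => εw * δx'w u) P := hid.const_mul εw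
  have ibU : Integrable (fun u => ηxw' u * UX) P := hib.mul_const UX
  have lhs : ∫ u, (1 - (1 - ηxw u) * (1 - δx'w u) - UX - εw * δx'w u) ∂P =
      1 - (∫ u, (1 - ηxw u) * (1 - δx'w u) ∂P) - UX - εw * (∫ u, δx'w u ∂P) := by
    rw [integral_sub i2 iεd, integral_sub i1 (integrable_const UX),
      integral_sub (integrable_const 1) hiprod, integral_const_mul, integral_const, integral_const]
    simp
  have rhs : ∫ u, (ηxw u - ηxw' u * UX) ∂P =
      (∫ u, ηxw u ∂P) - (∫ u, ηxw' u ∂P) * UX := by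
    rw [integral_sub hia ibU, integral_mul_const]
  rw [lhs, rhs] at key
  exact key
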